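/- Let n ≥ 2, let t_1 < t_2 < ⋯ < t_{n+1} be real numbers, and set rel_gap := min_{i≠j} |t_i − t_j|/(|t_i| + |t_j|) and κ := 1/rel_gap. Let θ ≥ 0 satisfy (2n−2)·κ·θ < 1, and let t'_i = t_i(1 + δ_i) with |δ_i| ≤ θ for i = 1, …, n+1. Then the t'_i are pairwise distinct, and with β := (2n−2)κθ/(1 − (2n−2)κθ): for all 1 ≤ j < i ≤ n+1 the quantities m_{i,j} := ∏_{k=1}^{j−1} (t_i − t_{i−k})/(t_{i−1} − t_{i−k−1}) and m'_{i,j} := ∏_{k=1}^{j−1} (t'_i − t'_{i−k})/(t'_{i−1} − t'_{i−k−1}) satisfy |m'_{i,j} − m_{i,j}| ≤ β·|m_{i,j}|, and for all 1 ≤ i ≤ n+1 the quantities p_i := ∏_{k=1}^{i−1}(t_i − t_k) and p'_i := ∏_{k=1}^{i−1}(t'_i − t'_k) satisfy |p'_i − p_i| ≤ β·|p_i|. -/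

import Mathlib

open Finset


lemma ratio_bounds' (u a a' : ℝ) (hu0 : 0 ≤ u) (hu1 : u < 1) (ha : a ≠ 0)
    (h : |a' - a| ≤ u * |a|) :
    1 - u ≤ a' / a ∧ a' / a ≤ (1 - u)⁻¹ := by
  have hA : 0 < |a| := abs_pos.mpr ha
  have hb : 0 < 1 - u := by linarith
  have h1 : |a' / a - 1| ≤ u := by
    have he : a' / a - 1 = (a' - a) / a := by field_simp
    rw [he, abs_div, div_le_iff₀ hA]
    linarith
  rw [abs_le] at h1
  constructor
  · linarith [h1.1]
  · have h2 : a' / a ≤ 1 + u := by linarith [h1.2]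
    have hinv : (1 - u) * (1 - u)⁻¹ = 1 := mul_inv_cancel₀ (ne_of_gt hb)
    nlinarith [h1.2, hinv, hb]

lemma inv_mem_bounds (u r : ℝ) (hu1 : u < 1) (h1 : 1 - u ≤ r) (h2 : r ≤ (1 - u)⁻¹) :
    1 - u ≤ r⁻¹ ∧ r⁻¹ ≤ (1 - u)⁻¹ := by
  have hb : 0 < 1 - u := by linarith
  have hr : 0 < r := lt_of_lt_of_le hb h1
  constructor
  · have := inv_anti₀ hr h2
    rwa [inv_inv] at this
  · exact inv_anti₀ hb h1

lemma prod_relbound (u : ℝ) (hu0 : 0 ≤ u) (N c : ℕ) (hN1 : 1 ≤ N)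
    (hNu : (N : ℝ) * u < 1)
    (s : Finset ℕ) (hcard : c * s.card ≤ N) (f f' : ℕ → ℝ)
    (hf0 : ∀ k ∈ s, f k ≠ 0)
    (hr : ∀ k ∈ s, (1 - u) ^ c ≤ f' k / f k ∧ f' k / f k ≤ ((1 - u)⁻¹) ^ c) :
    |(∏ k ∈ s, f' k) - ∏ k ∈ s, f k| ≤ (N : ℝ) * u / (1 - (N : ℝ) * u) * |∏ k ∈ s, f k| := by
  have hN1' : (1 : ℝ) ≤ N := by exact_mod_cast hN1
  have hu1 : u < 1 := lt_of_le_of_lt (le_mul_of_one_le_left hu0 hN1') hNu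
  have hb : 0 < 1 - u := by linarith
  set R := ∏ k ∈ s, f' k / f k with hR
  have hP : ∏ k ∈ s, f' k = (∏ k ∈ s, f k) * R := by
    rw [hR, ← Finset.prod_mul_distrib]
    refine Finset.prod_congr rfl fun k hk => ?_
    rw [mul_comm, div_mul_cancel₀ _ (hf0 k hk)]
  have hRlo : (1 - u) ^ (c * s.card) ≤ R := by
    calc (1 - u) ^ (c * s.card) = ∏ _k ∈ s, (1 - u) ^ c := by
          rw [Finset.prod_const, ← pow_mul]
      _ ≤ R := Finset.prod_le_prod (fun k _ => pow_nonneg hb.le c) (fun k hk => (hr k hk).1)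
  have hRhi : R ≤ ((1 - u)⁻¹) ^ (c * s.card) := by
    calc R ≤ ∏ _k ∈ s, ((1 - u)⁻¹) ^ c :=
          Finset.prod_le_prod (fun k hk => le_trans (pow_nonneg hb.le c) (hr k hk).1)
            (fun k hk => (hr k hk).2)
      _ = ((1 - u)⁻¹) ^ (c * s.card) := by rw [Finset.prod_const, ← pow_mul]
  have hlo2 : (1 - u) ^ N ≤ (1 - u) ^ (c * s.card) :=
    pow_le_pow_of_le_one hb.le (by linarith) hcard
  have hb1 : 1 ≤ (1 - u)⁻¹ := (one_le_inv₀ hb).mpr (by linarith)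
  have hhi2 : ((1 - u)⁻¹) ^ (c * s.card) ≤ ((1 - u)⁻¹) ^ N := pow_le_pow_right₀ hb1 hcard
  have hbern : 1 - (N : ℝ) * u ≤ (1 - u) ^ N := by
    have := one_add_mul_le_pow (a := -u) (by linarith) N
    calc 1 - (N : ℝ) * u = 1 + (N : ℝ) * (-u) := by ring
      _ ≤ (1 + -u) ^ N := this
      _ = (1 - u) ^ N := by ring_nf
  have hNu0 : 0 < 1 - (N : ℝ) * u := by linarith
  have hNunn : 0 ≤ (N : ℝ) * u := mul_nonneg (Nat.cast_nonneg N) hu0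
  have hhi3 : ((1 - u)⁻¹) ^ N ≤ (1 - (N : ℝ) * u)⁻¹ := by
    rw [inv_pow]
    exact inv_anti₀ hNu0 hbern
  have h1 : R - 1 ≤ (N : ℝ) * u / (1 - (N : ℝ) * u) := by
    have hR' : R ≤ (1 - (N : ℝ) * u)⁻¹ := le_trans (le_trans hRhi hhi2) hhi3
    have heq : (1 - (N : ℝ) * u)⁻¹ - 1 = (N : ℝ) * u / (1 - (N : ℝ) * u) := by
      field_simp
      ring
    linarith
  have h2 : 1 - R ≤ (N : ℝ) * u / (1 - (N : ℝ) * u) := by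
    have hRl : 1 - (N : ℝ) * u ≤ R := le_trans hbern (le_trans hlo2 hRlo)
    have : (N : ℝ) * u ≤ (N : ℝ) * u / (1 - (N : ℝ) * u) := by
      rw [le_div_iff₀ hNu0]; nlinarith
    linarith
  have habs : |R - 1| ≤ (N : ℝ) * u / (1 - (N : ℝ) * u) := abs_le.mpr ⟨by linarith, h1⟩
  calc |(∏ k ∈ s, f' k) - ∏ k ∈ s, f k| = |∏ k ∈ s, f k| * |R - 1| := by
        rw [hP, ← abs_mul]; ring_nf
    _ ≤ |∏ k ∈ s, f k| * ((N : ℝ) * u / (1 - (N : ℝ) * u)) :=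
        mul_le_mul_of_nonneg_left habs (abs_nonneg _)
    _ = (N : ℝ) * u / (1 - (N : ℝ) * u) * |∏ k ∈ s, f k| := mul_comm _ _

/-- perturbation bound for the bidiagonal decomposition of the
Newton collocation matrix. `relgap` is the minimum of
`|t i − t j|/(|t i| + |t j|)` over `i ≠ j` (expressed via `IsLeast`), and
`β = (2n−2)·κ·θ/(1 − (2n−2)·κ·θ)` with `κ = relgap⁻¹`. (1-based node
indexing: nodes `t 1, …, t (n+1)`.) -/
theorem newton_bidiagonal_decomposition_perturbation
    (n : ℕ) (hn : 2 ≤ n) (t : ℕ → ℝ)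
    (ht : ∀ i j, 1 ≤ i → i < j → j ≤ n + 1 → t i < t j)
    (relgap : ℝ)
    (hrg : IsLeast {x : ℝ | ∃ i ∈ Finset.Icc 1 (n + 1), ∃ j ∈ Finset.Icc 1 (n + 1),
      i ≠ j ∧ x = |t i - t j| / (|t i| + |t j|)} relgap)
    (θ : ℝ) (hθ : 0 ≤ θ)
    (hsmall : (2 * (n : ℝ) - 2) * relgap⁻¹ * θ < 1)
    (δ : ℕ → ℝ) (hδ : ∀ i, 1 ≤ i → i ≤ n + 1 → |δ i| ≤ θ)
    (t' : ℕ → ℝ) (ht' : ∀ i, 1 ≤ i → i ≤ n + 1 → t' i = t i * (1 + δ i)) :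
    (∀ i j, 1 ≤ i → i ≤ n + 1 → 1 ≤ j → j ≤ n + 1 → i ≠ j → t' i ≠ t' j) ∧
    (∀ i j, 1 ≤ j → j < i → i ≤ n + 1 →
      |(∏ k ∈ Finset.Icc 1 (j - 1), (t' i - t' (i - k)) / (t' (i - 1) - t' (i - k - 1))) -
        ∏ k ∈ Finset.Icc 1 (j - 1), (t i - t (i - k)) / (t (i - 1) - t (i - k - 1))| ≤
      (2 * (n : ℝ) - 2) * relgap⁻¹ * θ / (1 - (2 * (n : ℝ) - 2) * relgap⁻¹ * θ) *
        |∏ k ∈ Finset.Icc 1 (j - 1), (t i - t (i - k)) / (t (i - 1) - t (i - k - 1))|) ∧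
    (∀ i, 1 ≤ i → i ≤ n + 1 →
      |(∏ k ∈ Finset.Icc 1 (i - 1), (t' i - t' k)) -
        ∏ k ∈ Finset.Icc 1 (i - 1), (t i - t k)| ≤
      (2 * (n : ℝ) - 2) * relgap⁻¹ * θ / (1 - (2 * (n : ℝ) - 2) * relgap⁻¹ * θ) *
        |∏ k ∈ Finset.Icc 1 (i - 1), (t i - t k)|) := by
  -- basic facts about relgap
  have tne : ∀ a b, 1 ≤ a → a ≤ n + 1 → 1 ≤ b → b ≤ n + 1 → a ≠ b → t a ≠ t b := by
    intro a b ha1 ha2 hb1 hb2 hab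
    rcases lt_or_gt_of_ne hab with h | h
    · exact ne_of_lt (ht a b ha1 h hb2)
    · exact ne_of_gt (ht b a hb1 h ha2)
  have hrgpos : 0 < relgap := by
    obtain ⟨a, ha, b, hb, hab, heq⟩ := hrg.1
    rw [Finset.mem_Icc] at ha hb
    have htne : t a ≠ t b := tne a b ha.1 ha.2 hb.1 hb.2 hab
    have hD : 0 < |t a - t b| := abs_pos.mpr (sub_ne_zero.mpr htne)
    have hS : 0 < |t a| + |t b| := lt_of_lt_of_le hD (abs_sub _ _)
    rw [heq]; exact div_pos hD hS
  have hκ : 0 ≤ relgap⁻¹ := inv_nonneg.mpr hrgpos.le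
  set u : ℝ := relgap⁻¹ * θ with hu
  have hu0 : 0 ≤ u := mul_nonneg hκ hθ
  set N : ℕ := 2 * n - 2 with hNdef
  have hN1 : 1 ≤ N := by omega
  have hNcast : (N : ℝ) = 2 * (n : ℝ) - 2 := by
    have h2 : 2 ≤ 2 * n := by omega
    rw [hNdef]; push_cast [Nat.cast_sub h2]; ring
  have hNu : (N : ℝ) * u < 1 := by
    rw [hNcast, hu]; nlinarith [hsmall]
  have hN1' : (1 : ℝ) ≤ N := by exact_mod_cast hN1
  have hu1 : u < 1 := lt_of_le_of_lt (le_mul_of_one_le_left hu0 hN1') hNu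
  have hβ : (N : ℝ) * u / (1 - (N : ℝ) * u)
      = (2 * (n : ℝ) - 2) * relgap⁻¹ * θ / (1 - (2 * (n : ℝ) - 2) * relgap⁻¹ * θ) := by
    rw [hNcast, hu]; ring_nf
  -- the key pairwise perturbation bound
  have hpair : ∀ a b, 1 ≤ a → a ≤ n + 1 → 1 ≤ b → b ≤ n + 1 → a ≠ b →
      |(t' a - t' b) - (t a - t b)| ≤ u * |t a - t b| := by
    intro a b ha1 ha2 hb1 hb2 hab
    have htne : t a ≠ t b := tne a b ha1 ha2 hb1 hb2 hab
    have hD : 0 < |t a - t b| := abs_pos.mpr (sub_ne_zero.mpr htne)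
    have hS : 0 < |t a| + |t b| := lt_of_lt_of_le hD (abs_sub _ _)
    have hmem : |t a - t b| / (|t a| + |t b|) ∈ {x : ℝ | ∃ i ∈ Finset.Icc 1 (n + 1),
        ∃ j ∈ Finset.Icc 1 (n + 1), i ≠ j ∧ x = |t i - t j| / (|t i| + |t j|)} :=
      ⟨a, Finset.mem_Icc.mpr ⟨ha1, ha2⟩, b, Finset.mem_Icc.mpr ⟨hb1, hb2⟩, hab, rfl⟩
    have hlb := hrg.2 hmem
    have hSD : |t a| + |t b| ≤ relgap⁻¹ * |t a - t b| := by
      rw [le_div_iff₀ hS] at hlb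
      rw [← mul_le_mul_iff_of_pos_left hrgpos]
      calc relgap * (|t a| + |t b|) ≤ |t a - t b| := hlb
        _ = relgap * (relgap⁻¹ * |t a - t b|) := by
            rw [← mul_assoc, mul_inv_cancel₀ (ne_of_gt hrgpos), one_mul]
    have key : t' a - t' b - (t a - t b) = t a * δ a - t b * δ b := by
      rw [ht' a ha1 ha2, ht' b hb1 hb2]; ring
    calc |(t' a - t' b) - (t a - t b)| = |t a * δ a - t b * δ b| := by rw [key]
      _ ≤ |t a * δ a| + |t b * δ b| := abs_sub _ _
      _ = |t a| * |δ a| + |t b| * |δ b| := by rw [abs_mul, abs_mul]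
      _ ≤ |t a| * θ + |t b| * θ := by
          gcongr <;> [exact hδ a ha1 ha2; exact hδ b hb1 hb2]
      _ = θ * (|t a| + |t b|) := by ring
      _ ≤ θ * (relgap⁻¹ * |t a - t b|) := by
          exact mul_le_mul_of_nonneg_left hSD hθ
      _ = u * |t a - t b| := by rw [hu]; ring
  -- distinctness of perturbed nodes
  have hdist : ∀ i j, 1 ≤ i → i ≤ n + 1 → 1 ≤ j → j ≤ n + 1 → i ≠ j → t' i ≠ t' j := by
    intro a b ha1 ha2 hb1 hb2 hab heq
    have h := hpair a b ha1 ha2 hb1 hb2 hab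
    have htne : t a ≠ t b := tne a b ha1 ha2 hb1 hb2 hab
    have hD : 0 < |t a - t b| := abs_pos.mpr (sub_ne_zero.mpr htne)
    rw [heq] at h
    have : |0 - (t a - t b)| = |t a - t b| := by rw [zero_sub, abs_neg]
    rw [sub_self, this] at h
    nlinarith
  refine ⟨hdist, ?_, ?_⟩
  · -- the m_{i,j} bound
    intro i j hj1 hji hi
    have hb : 0 < 1 - u := by linarith
    have hnum : ∀ k ∈ Finset.Icc 1 (j - 1), t i - t (i - k) ≠ 0 := by
      intro k hk
      rw [Finset.mem_Icc] at hk
      exact sub_ne_zero.mpr (tne i (i - k) (by omega) hi (by omega) (by omega) (by omega))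
    have hden : ∀ k ∈ Finset.Icc 1 (j - 1), t (i - 1) - t (i - k - 1) ≠ 0 := by
      intro k hk
      rw [Finset.mem_Icc] at hk
      exact sub_ne_zero.mpr
        (tne (i - 1) (i - k - 1) (by omega) (by omega) (by omega) (by omega) (by omega))
    have hbound := prod_relbound u hu0 N 2 hN1 hNu (Finset.Icc 1 (j - 1))
      (by rw [Nat.card_Icc]; omega)
      (fun k => (t i - t (i - k)) / (t (i - 1) - t (i - k - 1)))
      (fun k => (t' i - t' (i - k)) / (t' (i - 1) - t' (i - k - 1)))
      (fun k hk => div_ne_zero (hnum k hk) (hden k hk)) ?_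
    · rw [hβ] at hbound
      exact hbound
    · intro k hk
      have hk' := hk
      rw [Finset.mem_Icc] at hk'
      have hrn := ratio_bounds' u (t i - t (i - k)) (t' i - t' (i - k)) hu0 hu1
        (hnum k hk) (hpair i (i - k) (by omega) hi (by omega) (by omega) (by omega))
      have hrd := ratio_bounds' u (t (i - 1) - t (i - k - 1)) (t' (i - 1) - t' (i - k - 1))
        hu0 hu1 (hden k hk)
        (hpair (i - 1) (i - k - 1) (by omega) (by omega) (by omega) (by omega) (by omega))
      have hrd' := inv_mem_bounds u _ hu1 hrd.1 hrd.2
      have heq : (t' i - t' (i - k)) / (t' (i - 1) - t' (i - k - 1)) /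
          ((t i - t (i - k)) / (t (i - 1) - t (i - k - 1)))
          = (t' i - t' (i - k)) / (t i - t (i - k)) *
            ((t' (i - 1) - t' (i - k - 1)) / (t (i - 1) - t (i - k - 1)))⁻¹ := by
        rw [div_div_div_comm, div_eq_mul_inv]
      have hrpos : (0:ℝ) ≤ (t' i - t' (i - k)) / (t i - t (i - k)) :=
        le_trans hb.le hrn.1
      have hspos : (0:ℝ) ≤ ((t' (i - 1) - t' (i - k - 1)) / (t (i - 1) - t (i - k - 1)))⁻¹ :=
        le_trans hb.le hrd'.1
      constructor
      · rw [heq, sq]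
        exact mul_le_mul hrn.1 hrd'.1 hb.le hrpos
      · rw [heq, sq]
        exact mul_le_mul hrn.2 hrd'.2 hspos (inv_nonneg.mpr hb.le)
  · -- the p_i bound
    intro i hi1 hi2
    have hbound := prod_relbound u hu0 N 1 hN1 hNu (Finset.Icc 1 (i - 1))
      (by rw [Nat.card_Icc]; omega) (fun k => t i - t k) (fun k => t' i - t' k)
      (fun k hk => by
        rw [Finset.mem_Icc] at hk
        exact sub_ne_zero.mpr (tne i k hi1 hi2 hk.1 (by omega) (by omega)))
      (fun k hk => by
        rw [Finset.mem_Icc] at hk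
        simpa [pow_one] using ratio_bounds' u (t i - t k) (t' i - t' k) hu0 hu1
          (sub_ne_zero.mpr (tne i k hi1 hi2 hk.1 (by omega) (by omega)))
          (hpair i k hi1 hi2 hk.1 (by omega) (by omega)))
    rw [hβ] at hbound
    exact hbound
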